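/- Let h_k(t) := (1/(k+1)) Σ_{ℓ=0}^{k} cos((2ℓ+1)t) and δ_k := 2πk/(2k+1). Then for all t ∈ [0, δ_k], h_k(t) ≥ cos(δ_k). -/
import Mathlib


open Real Finset

lemma hk_key (n : ℕ) (t : ℝ) :
    2 * Real.sin t * ∑ ℓ ∈ Finset.range n, Real.cos ((2 * (ℓ : ℝ) + 1) * t)
      = Real.sin (2 * n * t) := by
  induction n with
  | zero => simp
  | succ n ih =>
    rw [Finset.sum_range_succ, mul_add, ih]
    have h : Real.sin (2 * ((n : ℝ) + 1) * t) - Real.sin (2 * (n : ℝ) * t)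
        = 2 * Real.sin t * Real.cos ((2 * (n : ℝ) + 1) * t) := by
      rw [Real.sin_sub_sin]; ring_nf
    push_cast
    linarith [h]

/-- `h_k(t) = (1/(k+1)) ∑_{ℓ=0}^{k} cos((2ℓ+1) t)`. -/
noncomputable def hkFun (k : ℕ) (t : ℝ) : ℝ :=
  (∑ ℓ ∈ Finset.range (k + 1), Real.cos ((2 * (ℓ : ℝ) + 1) * t)) / (k + 1)

/-- For `k ≥ 1` and all `t ∈ [0, δ_k]` where `δ_k = 2πk/(2k+1)`,
one has `h_k(t) ≥ cos(δ_k)`. -/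
theorem stmt6 (k : ℕ) (hk : 1 ≤ k) (t : ℝ)
    (ht : t ∈ Set.Icc (0 : ℝ) (2 * π * k / (2 * k + 1))) :
    Real.cos (2 * π * k / (2 * k + 1)) ≤ hkFun k t := by
  obtain ⟨ht0, ht1⟩ := ht
  have hk1 : (1 : ℝ) ≤ (k : ℝ) := by exact_mod_cast hk
  have hπ : (0 : ℝ) < π := Real.pi_pos
  have hm : (3 : ℝ) ≤ 2 * (k : ℝ) + 1 := by linarith
  have hm0 : (0 : ℝ) < 2 * (k : ℝ) + 1 := by linarith
  set a : ℝ := π / (2 * (k : ℝ) + 1) with ha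
  have ha0 : 0 < a := by positivity
  have ha3 : a ≤ π / 3 := by
    rw [ha]; exact div_le_div_of_nonneg_left hπ.le (by norm_num) hm
  have hδ : 2 * π * (k : ℝ) / (2 * (k : ℝ) + 1) = π - a := by
    rw [ha]; field_simp; ring
  have hcosδ : Real.cos (2 * π * (k : ℝ) / (2 * (k : ℝ) + 1)) = -Real.cos a := by
    rw [hδ, Real.cos_pi_sub]
  have hc_half : (1 / 2 : ℝ) ≤ Real.cos a := by
    calc (1 / 2 : ℝ) = Real.cos (π / 3) := Real.cos_pi_div_three.symm
      _ ≤ Real.cos a := Real.cos_le_cos_of_nonneg_of_le_pi ha0.le (by linarith) ha3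
  rw [hcosδ]
  have hkp : (0 : ℝ) < (k : ℝ) + 1 := by linarith
  rw [hkFun, le_div_iff₀ hkp]
  rcases le_or_gt t a with hta | hta
  · -- small t : cos t ≥ 1/2, other terms ≥ -1
    have hcost : (1 / 2 : ℝ) ≤ Real.cos t := by
      calc (1 / 2 : ℝ) = Real.cos (π / 3) := Real.cos_pi_div_three.symm
        _ ≤ Real.cos t := Real.cos_le_cos_of_nonneg_of_le_pi ht0 (by linarith) (by linarith)
    have hsum : Real.cos t + (-1 : ℝ) * k ≤
        ∑ ℓ ∈ Finset.range (k + 1), Real.cos ((2 * (ℓ : ℝ) + 1) * t) := by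
      rw [Finset.sum_range_succ']
      have h1 : ∑ i ∈ Finset.range k, (-1 : ℝ) ≤
          ∑ i ∈ Finset.range k, Real.cos ((2 * ((i : ℝ) + 1) + 1) * t) :=
        Finset.sum_le_sum fun i _ => Real.neg_one_le_cos _
      simp only [Finset.sum_const, Finset.card_range, nsmul_eq_mul] at h1
      push_cast
      norm_num
      linarith
    have hca : 1 - a ^ 2 / 2 ≤ Real.cos a := Real.one_sub_sq_div_two_le_cos
    have haπ : a * (2 * (k : ℝ) + 1) = π := by rw [ha]; field_simp
    have hπ2 : π ≤ 3.15 := Real.pi_lt_d2.le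
    have key2 : (k : ℝ) + 1 ≤ ((k : ℝ) + 1) * Real.cos a + 3 / 2 := by
      nlinarith [sq_nonneg a, sq_nonneg ((k:ℝ) - 1), ha0]
    nlinarith [hsum, hcost]
  · -- large t : use kernel formula
    have htπ : t ≤ π - a := by rw [← hδ]; exact ht1
    have hsa : 2 / (2 * (k : ℝ) + 1) ≤ Real.sin a := by
      have := Real.mul_le_sin ha0.le (by linarith)
      calc 2 / (2 * (k : ℝ) + 1) = 2 / π * a := by rw [ha]; field_simp
        _ ≤ Real.sin a := this
    have hsin : 2 / (2 * (k : ℝ) + 1) ≤ Real.sin t := by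
      rcases le_or_gt t (π / 2) with h2 | h2
      · exact hsa.trans (Real.sin_le_sin_of_le_of_le_pi_div_two (by linarith) h2 hta.le)
      · have : Real.sin (π - t) = Real.sin t := Real.sin_pi_sub t
        rw [← this]
        exact hsa.trans (Real.sin_le_sin_of_le_of_le_pi_div_two (by linarith) (by linarith)
          (by linarith))
    have hst : 0 < Real.sin t := lt_of_lt_of_le (by positivity) hsin
    have hker := hk_key (k + 1) t
    set S : ℝ := ∑ ℓ ∈ Finset.range (k + 1), Real.cos ((2 * (ℓ : ℝ) + 1) * t) with hS
    have hlb : -(2 * (k : ℝ) + 1) / 4 ≤ S := by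
      rcases le_or_gt 0 S with hS0 | hS0
      · nlinarith
      · have h1 : -1 ≤ 2 * Real.sin t * S := by
          rw [hker]; exact Real.neg_one_le_sin _
        have hsin' : 2 ≤ Real.sin t * (2 * (k : ℝ) + 1) := (div_le_iff₀ hm0).mp hsin
        nlinarith [mul_nonneg (sub_nonneg.2 hsin') (neg_nonneg.2 hS0.le), h1, hm0]
    have := mul_le_mul_of_nonneg_right hc_half hkp.le
    linarith
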